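/- Let (g_λ)_{λ∈X} be a family of elements of ẑ[X] such that g_λ(λ) = 1 and g_λ(μ) = 0 unless μ ≤ λ, for every λ ∈ X. Then for every f ∈ ẑ[X] there exists a unique c ∈ ẑ[X] such that for every x ∈ X the sum Σ_{λ∈X} c(λ)·g_λ(x) has finitely many nonzero terms and equals f(x). Moreover, if supp(f) ⊆ X(≤μ₁) ∪ … ∪ X(≤μᵣ) then also supp(c) ⊆ X(≤μ₁) ∪ … ∪ X(≤μᵣ). -/

import Mathlib

/-- The weight lattice `X = ℤⁿ`. -/
abbrev X (n : ℕ) := Fin n → ℤ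

/-- The order on `X` induced by the simple roots `α`:
`lam ≤ mu` iff `mu - lam` is an `ℕ`-linear combination of the `α i`. -/
def rootsLE {n : ℕ} (α : Fin n → X n) (lam mu : X n) : Prop :=
  ∃ c : Fin n → ℕ, mu - lam = ∑ i, (c i : ℤ) • α i

/-- Membership in the completed group ring `ẑ[X]`. -/
def InZhat {n : ℕ} (α : Fin n → X n) (f : X n → ℤ) : Prop :=
  ∃ (r : ℕ) (μ : Fin r → X n), ∀ lam, f lam ≠ 0 → ∃ i, rootsLE α lam (μ i)

section aux
variable {n : ℕ} {α : Fin n → X n}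

theorem rootsLE.refl (x : X n) : rootsLE α x x :=
  ⟨0, by simp⟩

theorem rootsLE.trans {x y z : X n} (h1 : rootsLE α x y) (h2 : rootsLE α y z) :
    rootsLE α x z := by
  obtain ⟨c, hc⟩ := h1; obtain ⟨d, hd⟩ := h2
  refine ⟨c + d, ?_⟩
  have : z - x = (z - y) + (y - x) := by ring
  rw [this, hc, hd, ← Finset.sum_add_distrib]
  congr 1; funext i; simp only [Pi.add_apply]; push_cast; rw [add_smul]; abel

theorem coeff_inj (hα : LinearIndependent ℚ (fun i j => (α i j : ℚ)))
    {a b : Fin n → ℤ} (h : ∑ i, a i • α i = ∑ i, b i • α i) : a = b := by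
  have key : ∀ i, ((a i : ℚ) - b i) = 0 := by
    refine Fintype.linearIndependent_iff.mp hα (fun i => (a i : ℚ) - b i) ?_
    funext j
    have hj : (∑ i, a i • α i) j = (∑ i, b i • α i) j := by rw [h]
    simp only [Finset.sum_apply, Pi.smul_apply, smul_eq_mul] at hj
    have : ((∑ i, a i * α i j : ℤ) : ℚ) = ((∑ i, b i * α i j : ℤ) : ℚ) := by rw [hj]
    push_cast at this
    simp only [Finset.sum_apply, Pi.smul_apply, Pi.zero_apply, smul_eq_mul]
    simp [sub_mul, Finset.sum_sub_distrib, this]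
  funext i
  have := key i
  have : (a i : ℚ) = b i := by linarith
  exact_mod_cast this

theorem coeff_inj' (hα : LinearIndependent ℚ (fun i j => (α i j : ℚ)))
    {a b : Fin n → ℕ} (h : ∑ i, (a i : ℤ) • α i = ∑ i, (b i : ℤ) • α i) : a = b := by
  have := coeff_inj hα (a := fun i => (a i : ℤ)) (b := fun i => (b i : ℤ)) h
  funext i; exact_mod_cast congrFun this i

theorem rootsLE.antisymm (hα : LinearIndependent ℚ (fun i j => (α i j : ℚ)))
    {x y : X n} (h1 : rootsLE α x y) (h2 : rootsLE α y x) : x = y := by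
  obtain ⟨c, hc⟩ := h1; obtain ⟨d, hd⟩ := h2
  have : ∑ i, ((c i + d i : ℕ) : ℤ) • α i = ∑ i, ((0 : ℕ) : ℤ) • α i := by
    simp only [Nat.cast_add, Nat.cast_zero, zero_smul, Finset.sum_const_zero]
    have : (y - x) + (x - y) = 0 := by ring
    rw [hc, hd, ← Finset.sum_add_distrib] at this
    rw [← this]; congr 1; funext i; push_cast; rw [add_smul]
  have h0 := coeff_inj' hα this
  have hc0 : c = 0 := by
    funext i; have := congrFun h0 i
    simp only [Pi.zero_apply] at this ⊢; omega
  have : y - x = 0 := by rw [hc, hc0]; simp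
  funext j
  have := congrFun this j
  simp only [Pi.sub_apply, Pi.zero_apply] at this
  omega

/-- Finiteness of intervals. -/
theorem interval_finite (hα : LinearIndependent ℚ (fun i j => (α i j : ℚ)))
    (x μ : X n) : {ν : X n | rootsLE α x ν ∧ rootsLE α ν μ}.Finite := by
  by_cases hxμ : rootsLE α x μ
  · obtain ⟨e, he⟩ := hxμ
    have : {ν : X n | rootsLE α x ν ∧ rootsLE α ν μ} ⊆
        (fun c : Fin n → ℕ => x + ∑ i, (c i : ℤ) • α i) '' (Set.Icc 0 e) := by
      rintro ν ⟨⟨c, hc⟩, ⟨d, hd⟩⟩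
      refine ⟨c, ⟨?_, ?_⟩, show x + ∑ i, (c i : ℤ) • α i = ν by rw [← hc]; ring⟩
      · intro i; exact Nat.zero_le _
      · -- c ≤ e since c + d = e
        have : ∑ i, ((c i + d i : ℕ) : ℤ) • α i = ∑ i, ((e i : ℕ) : ℤ) • α i := by
          rw [← he]
          have h2 : μ - x = (μ - ν) + (ν - x) := by ring
          rw [h2, hc, hd, ← Finset.sum_add_distrib]
          congr 1; funext i; push_cast; rw [add_smul]; abel
        have h0 := coeff_inj' hα this
        intro i
        exact Nat.le.intro (by simpa using congrFun h0 i)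
    exact Set.Finite.subset ((Set.finite_Icc 0 e).image _) this
  · convert Set.finite_empty
    ext ν; simp only [Set.mem_setOf_eq, Set.mem_empty_iff_false, iff_false, not_and]
    intro h1 h2; exact hxμ (h1.trans h2)

end aux

section coeffs
variable {n : ℕ}

def UpSet (α : Fin n → X n) {r : ℕ} (μ : Fin r → X n) (x : X n) : Set (X n) :=
  {ν | rootsLE α x ν ∧ x ≠ ν ∧ ∃ i, rootsLE α ν (μ i)}

theorem upSet_finite (α : Fin n → X n)
    (hα : LinearIndependent ℚ (fun i j => (α i j : ℚ))) {r : ℕ} (μ : Fin r → X n)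
    (x : X n) : (UpSet α μ x).Finite := by
  have : UpSet α μ x ⊆ ⋃ i, {ν : X n | rootsLE α x ν ∧ rootsLE α ν (μ i)} := by
    rintro ν ⟨h1, _, i, h3⟩
    exact Set.mem_iUnion.mpr ⟨i, h1, h3⟩
  exact Set.Finite.subset (Set.finite_iUnion fun i => interval_finite hα x (μ i)) this

noncomputable def upFinset (α : Fin n → X n)
    (hα : LinearIndependent ℚ (fun i j => (α i j : ℚ))) {r : ℕ} (μ : Fin r → X n)
    (x : X n) : Finset (X n) := (upSet_finite α hα μ x).toFinset

theorem mem_upFinset {α : Fin n → X n}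
    {hα : LinearIndependent ℚ (fun i j => (α i j : ℚ))} {r : ℕ} {μ : Fin r → X n}
    {x ν : X n} : ν ∈ upFinset α hα μ x ↔
      rootsLE α x ν ∧ x ≠ ν ∧ ∃ i, rootsLE α ν (μ i) := by
  simp [upFinset, UpSet, Set.Finite.mem_toFinset]

theorem upFinset_card_lt {α : Fin n → X n}
    {hα : LinearIndependent ℚ (fun i j => (α i j : ℚ))} {r : ℕ} {μ : Fin r → X n}
    {x ν : X n} (h : ν ∈ upFinset α hα μ x) :
    (upFinset α hα μ ν).card < (upFinset α hα μ x).card := by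
  obtain ⟨h1, h2, h3⟩ := mem_upFinset.mp h
  have hsub : upFinset α hα μ ν ⊆ (upFinset α hα μ x).erase ν := by
    intro ν' hν'
    obtain ⟨g1, g2, g3⟩ := mem_upFinset.mp hν'
    refine Finset.mem_erase.mpr ⟨?_, mem_upFinset.mpr ⟨h1.trans g1, ?_, g3⟩⟩
    · rintro rfl; exact g2 rfl
    · rintro rfl; exact h2 (rootsLE.antisymm hα h1 g1)
  calc (upFinset α hα μ ν).card ≤ ((upFinset α hα μ x).erase ν).card :=
        Finset.card_le_card hsub
    _ < (upFinset α hα μ x).card := Finset.card_erase_lt_of_mem h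

open Classical in
noncomputable def coeffAux (α : Fin n → X n)
    (hα : LinearIndependent ℚ (fun i j => (α i j : ℚ))) {r : ℕ} (μ : Fin r → X n)
    (g : X n → X n → ℤ) (f : X n → ℤ) (x : X n) : ℤ :=
  if _ : ∃ i, rootsLE α x (μ i) then
    f x - ∑ ν ∈ (upFinset α hα μ x).attach,
      coeffAux α hα μ g f ν.1 * g ν.1 x
  else 0
termination_by (upFinset α hα μ x).card
decreasing_by exact upFinset_card_lt (Finset.coe_mem _)

theorem coeffAux_eq (α : Fin n → X n)
    (hα : LinearIndependent ℚ (fun i j => (α i j : ℚ))) {r : ℕ} {μ : Fin r → X n}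
    (g : X n → X n → ℤ) (f : X n → ℤ) {x : X n} (h : ∃ i, rootsLE α x (μ i)) :
    coeffAux α hα μ g f x
      = f x - ∑ ν ∈ upFinset α hα μ x, coeffAux α hα μ g f ν * g ν x := by
  rw [coeffAux, dif_pos h, ← Finset.sum_attach (upFinset α hα μ x)
    (fun ν => coeffAux α hα μ g f ν * g ν x)]

theorem coeffAux_eq_zero (α : Fin n → X n)
    (hα : LinearIndependent ℚ (fun i j => (α i j : ℚ))) {r : ℕ} {μ : Fin r → X n}
    (g : X n → X n → ℤ) (f : X n → ℤ) {x : X n} (h : ¬ ∃ i, rootsLE α x (μ i)) :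
    coeffAux α hα μ g f x = 0 := by
  rw [coeffAux, dif_neg h]

theorem coeffAux_support (α : Fin n → X n)
    (hα : LinearIndependent ℚ (fun i j => (α i j : ℚ))) {r : ℕ} {μ : Fin r → X n}
    (g : X n → X n → ℤ) (f : X n → ℤ) :
    ∀ y, coeffAux α hα μ g f y ≠ 0 → ∃ ν, rootsLE α y ν ∧ f ν ≠ 0 := by
  suffices H : ∀ k y, (upFinset α hα μ y).card = k →
      coeffAux α hα μ g f y ≠ 0 → ∃ ν, rootsLE α y ν ∧ f ν ≠ 0 by
    exact fun y => H _ y rfl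
  intro k
  induction k using Nat.strong_induction_on with
  | _ k ih =>
    intro y hy hne
    by_cases h : ∃ i, rootsLE α y (μ i)
    · rw [coeffAux_eq α hα g f h] at hne
      by_cases hfy : f y = 0
      · -- some summand nonzero
        have : ∃ ν ∈ upFinset α hα μ y, coeffAux α hα μ g f ν * g ν y ≠ 0 := by
          by_contra hall
          push_neg at hall
          simp [Finset.sum_eq_zero hall, hfy] at hne
        obtain ⟨ν, hmem, hν⟩ := this
        have hc : coeffAux α hα μ g f ν ≠ 0 := left_ne_zero_of_mul hν
        obtain ⟨ν', h1, h2⟩ := ih _ (hy ▸ upFinset_card_lt hmem) ν rfl hc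
        exact ⟨ν', (mem_upFinset.mp hmem).1.trans h1, h2⟩
      · exact ⟨y, rootsLE.refl y, hfy⟩
    · exact absurd (coeffAux_eq_zero α hα g f h) hne

end coeffs

section height
variable {n : ℕ}

open Classical in
noncomputable def ht (α : Fin n → X n) (y lam : X n) : ℕ :=
  if h : rootsLE α y lam then ∑ i, h.choose i else 0

theorem ht_spec {α : Fin n → X n}
    (hα : LinearIndependent ℚ (fun i j => (α i j : ℚ)))
    {y a b : X n} (hya : rootsLE α y a) (hab : rootsLE α a b) :
    ht α y a ≤ ht α y b ∧ (ht α y a = ht α y b → a = b) := by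
  obtain ⟨e, he⟩ := hab
  have hyb : rootsLE α y b := hya.trans ⟨e, he⟩
  have ha : ht α y a = ∑ i, hya.choose i := dif_pos hya
  have hb : ht α y b = ∑ i, hyb.choose i := dif_pos hyb
  have hkey : hyb.choose = fun i => hya.choose i + e i := by
    apply coeff_inj' hα
    rw [← hyb.choose_spec]
    have hsplit : ∑ i, ((hya.choose i + e i : ℕ) : ℤ) • α i
        = (∑ i, (hya.choose i : ℤ) • α i) + ∑ i, (e i : ℤ) • α i := by
      rw [← Finset.sum_add_distrib]; congr 1; funext i; push_cast; rw [add_smul]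
    rw [hsplit, ← hya.choose_spec, ← he]; ring
  have hsum : ht α y b = (∑ i, hya.choose i) + ∑ i, e i := by
    rw [hb, hkey, Finset.sum_add_distrib]
  constructor
  · rw [ha, hsum]; omega
  · intro heq
    have he0 : ∀ i ∈ Finset.univ, e i = 0 := by
      rw [ha] at heq
      have : ∑ i, e i = 0 := by omega
      exact (Finset.sum_eq_zero_iff).mp this
    have : b - a = 0 := by
      rw [he, Finset.sum_eq_zero fun i hi => by rw [he0 i hi]; simp]
    funext j
    have := congrFun this j
    simp only [Pi.sub_apply, Pi.zero_apply] at this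
    omega

end height

/-- Let `(g_λ)` be a family in `ẑ[X]` with `g_λ(λ) = 1` and `g_λ(μ) = 0` unless
`μ ≤ λ`.  Every `f ∈ ẑ[X]` has a unique expansion `f = Σ_λ c(λ) g_λ` with
`c ∈ ẑ[X]`, each value being a finite sum; moreover if
`supp f ⊆ X(≤μ₁) ∪ … ∪ X(≤μᵣ)` then `supp c ⊆ X(≤μ₁) ∪ … ∪ X(≤μᵣ)`. -/
theorem unique_expansion_in_basis {n : ℕ} (hn : 1 ≤ n) (α : Fin n → X n)
    (hα : LinearIndependent ℚ (fun i j => (α i j : ℚ)))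
    (g : X n → X n → ℤ)
    (hgZ : ∀ lam, InZhat α (g lam))
    (hg1 : ∀ lam, g lam lam = 1)
    (hg0 : ∀ lam μ, ¬ rootsLE α μ lam → g lam μ = 0)
    (f : X n → ℤ) (hf : InZhat α f) :
    ∃ c : X n → ℤ,
      (InZhat α c ∧
        ∀ x : X n, {lam : X n | c lam * g lam x ≠ 0}.Finite ∧
          (∑ᶠ lam : X n, c lam * g lam x) = f x) ∧
      (∀ (r : ℕ) (μ : Fin r → X n),
        (∀ y, f y ≠ 0 → ∃ i, rootsLE α y (μ i)) →
        ∀ y, c y ≠ 0 → ∃ i, rootsLE α y (μ i)) ∧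
      (∀ c' : X n → ℤ,
        (InZhat α c' ∧
          ∀ x : X n, {lam : X n | c' lam * g lam x ≠ 0}.Finite ∧
            (∑ᶠ lam : X n, c' lam * g lam x) = f x) →
        c' = c) := by
  obtain ⟨r, μ, hμ⟩ := hf
  set c : X n → ℤ := coeffAux α hα μ g f with hc_def
  have hcsupp : ∀ y, c y ≠ 0 → ∃ ν, rootsLE α y ν ∧ f ν ≠ 0 :=
    coeffAux_support α hα g f
  have hcbound : ∀ y, c y ≠ 0 → ∃ i, rootsLE α y (μ i) := by
    intro y hy
    obtain ⟨ν, h1, h2⟩ := hcsupp y hy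
    obtain ⟨i, hi⟩ := hμ ν h2
    exact ⟨i, h1.trans hi⟩
  have hcZ : InZhat α c := ⟨r, μ, hcbound⟩
  -- finiteness of the summand support set, relative to arbitrary bound data
  have hfin : ∀ (c₀ : X n → ℤ), (∀ y, c₀ y ≠ 0 → ∃ i, rootsLE α y (μ i)) →
      ∀ x : X n, {lam : X n | c₀ lam * g lam x ≠ 0}.Finite := by
    intro c₀ hb x
    have hsub : {lam : X n | c₀ lam * g lam x ≠ 0} ⊆
        ⋃ i, {ν : X n | rootsLE α x ν ∧ rootsLE α ν (μ i)} := by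
      intro lam hlam
      simp only [Set.mem_setOf_eq] at hlam
      have h1 : c₀ lam ≠ 0 := left_ne_zero_of_mul hlam
      have h2 : g lam x ≠ 0 := right_ne_zero_of_mul hlam
      have hxlam : rootsLE α x lam := by
        by_contra hcon; exact h2 (hg0 lam x hcon)
      obtain ⟨i, hi⟩ := hb lam h1
      exact Set.mem_iUnion.mpr ⟨i, hxlam, hi⟩
    exact Set.Finite.subset (Set.finite_iUnion fun i => interval_finite hα x (μ i)) hsub
  have hsum : ∀ x : X n, (∑ᶠ lam : X n, c lam * g lam x) = f x := by
    intro x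
    by_cases h : ∃ i, rootsLE α x (μ i)
    · have hxnot : x ∉ upFinset α hα μ x := by
        intro hx; exact (mem_upFinset.mp hx).2.1 rfl
      have hsub : Function.support (fun lam => c lam * g lam x) ⊆
          ↑(insert x (upFinset α hα μ x)) := by
        intro lam hlam
        simp only [Function.mem_support] at hlam
        have h1 : c lam ≠ 0 := left_ne_zero_of_mul hlam
        have h2 : g lam x ≠ 0 := right_ne_zero_of_mul hlam
        have hxlam : rootsLE α x lam := by
          by_contra hcon; exact h2 (hg0 lam x hcon)
        by_cases hxe : x = lam
        · simp [← hxe]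
        · obtain ⟨i, hi⟩ := hcbound lam h1
          simp only [Finset.coe_insert, Set.mem_insert_iff]
          exact Or.inr (Set.Finite.mem_toFinset _ |>.mpr ⟨hxlam, hxe, i, hi⟩)
      rw [finsum_eq_finset_sum_of_support_subset _ hsub, Finset.sum_insert hxnot,
        hg1 x, mul_one]
      have := coeffAux_eq α hα g f h
      rw [← hc_def] at this
      rw [this]; ring
    · have hzero : ∀ lam, c lam * g lam x = 0 := by
        intro lam
        by_contra hlam
        have h1 : c lam ≠ 0 := left_ne_zero_of_mul hlam
        have h2 : g lam x ≠ 0 := right_ne_zero_of_mul hlam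
        have hxlam : rootsLE α x lam := by
          by_contra hcon; exact h2 (hg0 lam x hcon)
        obtain ⟨i, hi⟩ := hcbound lam h1
        exact h ⟨i, hxlam.trans hi⟩
      rw [finsum_eq_zero_of_forall_eq_zero hzero]
      by_contra hfx
      obtain ⟨i, hi⟩ := hμ x (fun h' => hfx h'.symm)
      exact h ⟨i, hi⟩
  refine ⟨c, ⟨hcZ, fun x => ⟨hfin c hcbound x, hsum x⟩⟩, ?_, ?_⟩
  · -- support condition for arbitrary bounds of f
    intro r' μ' hb y hy
    obtain ⟨ν, h1, h2⟩ := hcsupp y hy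
    obtain ⟨i, hi⟩ := hb ν h2
    exact ⟨i, h1.trans hi⟩
  · -- uniqueness
    rintro c' ⟨⟨r', μ', hb'⟩, hsum'⟩
    set d : X n → ℤ := fun yy => c' yy - c yy with hd_def
    suffices hd0 : ∀ y, d y = 0 by
      funext y
      have := hd0 y
      simp only [hd_def] at this
      linarith
    by_contra hcon
    push_neg at hcon
    obtain ⟨y, hy⟩ := hcon
    -- the set of points above y where d is nonzero
    set T : Set (X n) := {lam | rootsLE α y lam ∧ d lam ≠ 0} with hT_def
    have hTfin : T.Finite := by
      have hsub : T ⊆ (⋃ i, {ν : X n | rootsLE α y ν ∧ rootsLE α ν (μ i)}) ∪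
          ⋃ i, {ν : X n | rootsLE α y ν ∧ rootsLE α ν (μ' i)} := by
        rintro lam ⟨h1, h2⟩
        have : c' lam ≠ 0 ∨ c lam ≠ 0 := by
          by_contra hno; push_neg at hno
          exact h2 (by simp [hd_def, hno.1, hno.2])
        rcases this with h | h
        · obtain ⟨i, hi⟩ := hb' lam h
          exact Or.inr (Set.mem_iUnion.mpr ⟨i, h1, hi⟩)
        · obtain ⟨i, hi⟩ := hcbound lam h
          exact Or.inl (Set.mem_iUnion.mpr ⟨i, h1, hi⟩)
      exact Set.Finite.subset
        ((Set.finite_iUnion fun i => interval_finite hα y (μ i)).union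
          (Set.finite_iUnion fun i => interval_finite hα y (μ' i))) hsub
    have hTne : T.Nonempty := ⟨y, rootsLE.refl y, hy⟩
    obtain ⟨m, hmT, hmax⟩ : ∃ m ∈ T, ∀ a' ∈ T, ht α y m ≤ ht α y a' → ht α y m = ht α y a' := by
      obtain ⟨m, hmT, hm⟩ := Set.Finite.exists_maximalFor (ht α y) T hTfin hTne
      exact ⟨m, hmT, fun a ha hle => le_antisymm hle (hm ha hle)⟩
    obtain ⟨hym, hdm⟩ := hmT
    -- the expansion of 0 at m must be d m
    have hdsum : (∑ᶠ lam : X n, d lam * g lam m) = 0 := by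
      have h1 : Function.support (fun lam => c' lam * g lam m) =
          {lam : X n | c' lam * g lam m ≠ 0} := rfl
      have h2 : Function.support (fun lam => c lam * g lam m) =
          {lam : X n | c lam * g lam m ≠ 0} := rfl
      have heq : ∀ lam, d lam * g lam m = c' lam * g lam m - c lam * g lam m := by
        intro lam; simp only [hd_def]; ring
      calc (∑ᶠ lam : X n, d lam * g lam m)
          = ∑ᶠ lam : X n, (c' lam * g lam m - c lam * g lam m) := by
            exact finsum_congr heq
        _ = (∑ᶠ lam : X n, c' lam * g lam m) - ∑ᶠ lam : X n, c lam * g lam m := by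
            exact finsum_sub_distrib (show (Function.support fun lam => c' lam * g lam m).Finite from h1 ▸ (hsum' m).1)
              (show (Function.support fun lam => c lam * g lam m).Finite from h2 ▸ hfin c hcbound m)
        _ = f m - f m := by rw [(hsum' m).2, hsum m]
        _ = 0 := by ring
    have hsingle : (∑ᶠ lam : X n, d lam * g lam m) = d m * g m m := by
      apply finsum_eq_single
      intro lam hlam
      by_contra hne
      have h1 : d lam ≠ 0 := left_ne_zero_of_mul hne
      have h2 : g lam m ≠ 0 := right_ne_zero_of_mul hne
      have hmlam : rootsLE α m lam := by
        by_contra hcon2; exact h2 (hg0 lam m hcon2)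
      have hlamT : lam ∈ T := ⟨hym.trans hmlam, h1⟩
      obtain ⟨hle, heq⟩ := ht_spec hα hym hmlam
      exact hlam (ht_spec hα hym hmlam |>.2 (hmax lam hlamT hle) |>.symm)
    rw [hsingle, hg1, mul_one] at hdsum
    exact hdm hdsum
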